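/- arXiv:1909.13195 — 4 statements merged into one kernel-verified Lean document; each statement's English description precedes it below -/
import Mathlib

section
/- Consider the rotor walk with initial location a, sink Z, and initial rotor configuration ρ. For every time t ≥ 0 such that the walk has not terminated before time t (so that X_0, …, X_t are defined) and every i with 0 ≤ i ≤ t, there exists an oriented path in the rotor configuration ρ_t that starts at X_i and ends at X_t. -/
open Classical

universe u

variable {V : Type u}

/-- A rotor mechanism: for each vertex `x`, `τ x` restricts to a bijection of the
neighbor set of `x` having a single orbit. -/
def IsMechanism (G : SimpleGraph V) (τ : V → V → V) : Prop :=
  ∀ x : V, Set.BijOn (τ x) (G.neighborSet x) (G.neighborSet x) ∧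
    ∀ y ∈ G.neighborSet x, ∀ z ∈ G.neighborSet x, ∃ i : ℕ, (τ x)^[i] y = z

/-- One step of the rotor walk with sink `Z`; the walk freezes once it reaches `Z`. -/
noncomputable def rotorStep [DecidableEq V] (τ : V → V → V) (Z : Set V) :
    V × (V → V) → V × (V → V) := fun p =>
  if p.1 ∈ Z then p
  else (τ p.1 (p.2 p.1), Function.update p.2 p.1 (τ p.1 (p.2 p.1)))

/-- The rotor walk with initial location `a`, sink `Z` and initial rotor
configuration `ρ`: position (first component) and rotor configuration
(second component) at time `t`. -/
noncomputable def rotorWalk [DecidableEq V] (τ : V → V → V) (Z : Set V)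
    (a : V) (ρ : V → V) (t : ℕ) : V × (V → V) :=
  (rotorStep τ Z)^[t] (a, ρ)

/-- `Z`-oriented spanning forests of `G`, viewed as rotor configurations,
normalized to be the identity on `Z` (the values on `Z` are inconsequential). -/
def SFset (G : SimpleGraph V) (Z : Set V) : Set (V → V) :=
  {ρ | (∀ x ∉ Z, G.Adj x (ρ x)) ∧ (∀ x : V, ∃ ℓ : ℕ, ρ^[ℓ] x ∈ Z) ∧ ∀ x ∈ Z, ρ x = x}

/-- The eventual value of an eventually-constant sequence. -/
noncomputable def eventualVal (f : ℕ → V) : V :=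
  if h : ∃ t : ℕ, ∀ s : ℕ, t ≤ s → f s = f t then f h.choose else f 0

/-- The final rotor configuration `σ(a, Z; ρ)` of the rotor walk. -/
noncomputable def finalConfig [DecidableEq V] (τ : V → V → V) (Z : Set V)
    (a : V) (ρ : V → V) : V → V :=
  fun x => eventualVal fun t => (rotorWalk τ Z a ρ t).2 x

/-- `ξ_i(a_0, …, a_{i-1}, Z; ρ)`: the rotor configuration after `i` successive
walkers, started at `a_0, …, a_{i-1}`, have performed rotor walks with sink `Z`. -/
noncomputable def xiConfig [DecidableEq V] (τ : V → V → V) (Z : Set V) (av : ℕ → V) :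
    ℕ → (V → V) → (V → V)
  | 0, ρ => ρ
  | i + 1, ρ => finalConfig τ Z (av i) (xiConfig τ Z av i ρ)

/-- The set of times at which the rotor walk (run until it first reaches the
sink `Z`) is at a vertex of `W`; its cardinality is the odometer `u(a,Z;ρ)(W)`. -/
def visitTimes [DecidableEq V] (τ : V → V → V) (Z : Set V) (a : V) (ρ : V → V)
    (W : Set V) : Set ℕ :=
  {t | (rotorWalk τ Z a ρ t).1 ∈ W ∧ ∀ s < t, (rotorWalk τ Z a ρ s).1 ∉ Z}

/-- The event `E_{r,W}(a,Z)`: the rotor walk with initial location `a` and sink `Z`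
visits `W` some time after visiting a vertex at graph distance at least `r` from `W`. -/
def Eset [DecidableEq V] (G : SimpleGraph V) (τ : V → V → V) (r : ℕ) (W : Set V)
    (a : V) (Z : Set V) : Set (V → V) :=
  {ρ | ∃ t₁ t₂ : ℕ, t₁ < t₂ ∧ (∀ s < t₂, (rotorWalk τ Z a ρ s).1 ∉ Z) ∧
    (∀ w ∈ W, r ≤ G.dist w (rotorWalk τ Z a ρ t₁).1) ∧ (rotorWalk τ Z a ρ t₂).1 ∈ W}

/-- The event `D_r` (relative to the set `Z`): there is an oriented path in `ρ`
from a vertex at graph distance exactly `r` from `Z` to a vertex of `Z`. -/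
def Dset (G : SimpleGraph V) (Z : Set V) (r : ℕ) : Set (V → V) :=
  {ρ | ∃ x : V, ∃ ℓ : ℕ, (∀ w ∈ Z, r ≤ G.dist w x) ∧ (∃ w ∈ Z, G.dist w x = r) ∧
    ρ^[ℓ] x ∈ Z}

/-- The transition matrix `P_Z` of simple random walk on `G` killed upon hitting `Z`. -/
noncomputable def killedP (G : SimpleGraph V) [∀ v : V, Fintype (G.neighborSet v)]
    (Z : Set V) : Matrix {x : V // x ∉ Z} {x : V // x ∉ Z} ℝ :=
  fun x y => if G.Adj x.1 y.1 then (1 : ℝ) / (G.degree x.1) else 0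

/-- The Green function `((I - P_Z)⁻¹)_{a,x}` of simple random walk killed at `Z`,
as a function of a pair of vertices (zero if `V ∖ Z` is infinite or `a ∈ Z` or `x ∈ Z`). -/
noncomputable def greenFn (G : SimpleGraph V) [DecidableEq V]
    [∀ v : V, Fintype (G.neighborSet v)] (Z : Set V) (a x : V) : ℝ :=
  if h : ({y : V | y ∉ Z}).Finite ∧ a ∉ Z ∧ x ∉ Z then
    letI : Fintype {y : V // y ∉ Z} := h.1.fintype
    ((1 - killedP G Z)⁻¹) ⟨a, h.2.1⟩ ⟨x, h.2.2⟩
  else 0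

/-- For every time `t` such that the walk has not terminated before
time `t`, and every `i ≤ t`, there is an oriented path in `ρ_t` from `X_i` to `X_t`. -/
theorem stmt0 {V : Type u} [DecidableEq V] (G : SimpleGraph V) (hconn : G.Connected)
    [∀ v : V, Fintype (G.neighborSet v)] (τ : V → V → V) (hτ : IsMechanism G τ)
    (Z : Set V) (a : V) (ρ : V → V) (hρ : ∀ x : V, G.Adj x (ρ x))
    (t : ℕ) (hactive : ∀ s < t, (rotorWalk τ Z a ρ s).1 ∉ Z)
    (i : ℕ) (hi : i ≤ t) :
    ∃ ℓ : ℕ, ((rotorWalk τ Z a ρ t).2)^[ℓ] ((rotorWalk τ Z a ρ i).1)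
      = (rotorWalk τ Z a ρ t).1 := by
  clear hconn hτ hρ
  induction t with
  | zero =>
    interval_cases i
    exact ⟨0, rfl⟩
  | succ t ih =>
    have hstep : rotorWalk τ Z a ρ (t + 1) = rotorStep τ Z (rotorWalk τ Z a ρ t) := by
      simp [rotorWalk, Function.iterate_succ_apply']
    have hXt : (rotorWalk τ Z a ρ t).1 ∉ Z := hactive t (Nat.lt_succ_self t)
    have hstep' : rotorWalk τ Z a ρ (t + 1) =
        (τ (rotorWalk τ Z a ρ t).1 ((rotorWalk τ Z a ρ t).2 (rotorWalk τ Z a ρ t).1),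
         Function.update (rotorWalk τ Z a ρ t).2 (rotorWalk τ Z a ρ t).1
           (τ (rotorWalk τ Z a ρ t).1 ((rotorWalk τ Z a ρ t).2 (rotorWalk τ Z a ρ t).1))) := by
      rw [hstep, rotorStep, if_neg hXt]
    rcases Nat.lt_succ_iff_lt_or_eq.mp (Nat.lt_succ_of_le hi) with hlt | heq
    · -- i ≤ t
      have hi' : i ≤ t := Nat.lt_succ_iff.mp hlt
      have hact : ∀ s < t, (rotorWalk τ Z a ρ s).1 ∉ Z := fun s hs =>
        hactive s (Nat.lt_succ_of_lt hs)
      obtain ⟨ℓ, hℓ⟩ := ih hact hi'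
      set ρt := (rotorWalk τ Z a ρ t).2 with hρt
      set Xi := (rotorWalk τ Z a ρ i).1 with hXi
      set Xt := (rotorWalk τ Z a ρ t).1 with hXtdef
      have hex : ∃ n, ρt^[n] Xi = Xt := ⟨ℓ, hℓ⟩
      classical
      let m := Nat.find hex
      have hm : ρt^[m] Xi = Xt := Nat.find_spec hex
      have hmin : ∀ j < m, ρt^[j] Xi ≠ Xt := fun j hj => Nat.find_min hex hj
      set ρt' := (rotorWalk τ Z a ρ (t + 1)).2 with hρt'
      have hupd : ρt' = Function.update ρt Xt (τ Xt (ρt Xt)) := by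
        rw [hρt', hstep']
      have hagree : ∀ j ≤ m, ρt'^[j] Xi = ρt^[j] Xi := by
        intro j hj
        induction j with
        | zero => rfl
        | succ j ihj =>
          have hjm : j < m := hj
          rw [Function.iterate_succ_apply', Function.iterate_succ_apply',
            ihj (le_of_lt hjm), hupd, Function.update_of_ne (hmin j hjm)]
      refine ⟨m + 1, ?_⟩
      rw [Function.iterate_succ_apply', hagree m le_rfl, hm, hupd,
        Function.update_self, hstep']
    · -- i = t + 1
      subst heq
      exact ⟨0, rfl⟩
end

section
/- Consider the rotor walk with initial location a, sink Z, and initial rotor configuration ρ. For every time t ≥ 1 such that the walk has not terminated before time t and every i with 0 ≤ i < t, the rotor ρ_t(X_i) belongs to the set {X_{i+1}, X_{i+2}, …, X_t}. -/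
open Classical

universe u

variable {V : Type u}

/-- For every time `t ≥ 1` such that the walk has not terminated before
time `t`, and every `i < t`, the rotor `ρ_t (X_i)` lies in `{X_{i+1}, …, X_t}`. -/
theorem stmt1 {V : Type u} [DecidableEq V] (G : SimpleGraph V) (hconn : G.Connected)
    [∀ v : V, Fintype (G.neighborSet v)] (τ : V → V → V) (hτ : IsMechanism G τ)
    (Z : Set V) (a : V) (ρ : V → V) (hρ : ∀ x : V, G.Adj x (ρ x))
    (t : ℕ) (ht : 1 ≤ t) (hactive : ∀ s < t, (rotorWalk τ Z a ρ s).1 ∉ Z)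
    (i : ℕ) (hi : i < t) :
    ∃ j : ℕ, i + 1 ≤ j ∧ j ≤ t ∧
      (rotorWalk τ Z a ρ t).2 ((rotorWalk τ Z a ρ i).1) = (rotorWalk τ Z a ρ j).1 := by
  clear hconn hτ hρ
  revert ht hactive hi
  induction t with
  | zero => intro ht; omega
  | succ n ih =>
    intro _ hactive hi
    have hstep : rotorWalk τ Z a ρ (n+1) = rotorStep τ Z (rotorWalk τ Z a ρ n) := by
      simp [rotorWalk, Function.iterate_succ_apply']
    have hnZ : (rotorWalk τ Z a ρ n).1 ∉ Z := hactive n (by omega)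
    have hstep2 : rotorWalk τ Z a ρ (n+1) =
        (τ (rotorWalk τ Z a ρ n).1 ((rotorWalk τ Z a ρ n).2 (rotorWalk τ Z a ρ n).1),
         Function.update (rotorWalk τ Z a ρ n).2 (rotorWalk τ Z a ρ n).1
           (τ (rotorWalk τ Z a ρ n).1 ((rotorWalk τ Z a ρ n).2 (rotorWalk τ Z a ρ n).1))) := by
      rw [hstep, rotorStep]; simp [hnZ]
    by_cases hin : i = n
    · subst hin
      refine ⟨i+1, le_refl _, le_refl _, ?_⟩
      rw [hstep2]; simp
    · have hi' : i < n := by omega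
      obtain ⟨j, hj1, hj2, hj3⟩ := ih (by omega) (fun s hs => hactive s (by omega)) hi'
      by_cases hx : (rotorWalk τ Z a ρ i).1 = (rotorWalk τ Z a ρ n).1
      · exact ⟨n+1, by omega, le_refl _, by rw [hstep2, hx]; simp⟩
      · exact ⟨j, hj1, by omega, by rw [hstep2]; simp [Function.update_of_ne hx, hj3]⟩
end

section
/- Suppose the sink Z is nonempty and V∖Z is finite. Then for every initial location a ∈ V and every initial rotor configuration ρ, the rotor walk with sink Z reaches a vertex of Z after finitely many steps (i.e. the walk terminates in finite time). -/
open Classical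

universe u

variable {V : Type u}

/-- If the sink `Z` is nonempty and `V ∖ Z` is finite, then for every
initial location and every initial rotor configuration the rotor walk reaches `Z`
in finite time. -/
theorem stmt2 {V : Type u} [DecidableEq V] (G : SimpleGraph V) (hconn : G.Connected)
    [∀ v : V, Fintype (G.neighborSet v)] (τ : V → V → V) (hτ : IsMechanism G τ)
    (Z : Set V) (hZ : Z.Nonempty) (hfin : (Zᶜ : Set V).Finite)
    (a : V) (ρ : V → V) (hρ : ∀ x : V, G.Adj x (ρ x)) :
    ∃ t : ℕ, (rotorWalk τ Z a ρ t).1 ∈ Z := by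
  by_contra hcon
  push_neg at hcon
  set F := rotorWalk τ Z a ρ with hF
  -- one-step description of the walk (never frozen, by hcon)
  have hstep : ∀ t, (F (t+1)).1 = τ (F t).1 ((F t).2 (F t).1) ∧
      (F (t+1)).2 = Function.update (F t).2 (F t).1 (τ (F t).1 ((F t).2 (F t).1)) := by
    intro t
    have h1 : F (t+1) = rotorStep τ Z (F t) := Function.iterate_succ_apply' _ _ _
    rw [rotorStep, if_neg (hcon t)] at h1
    exact ⟨congrArg Prod.fst h1, congrArg Prod.snd h1⟩
  -- rotor values stay neighbors
  have hadj : ∀ t x, G.Adj x ((F t).2 x) := by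
    intro t
    induction t with
    | zero => intro x; exact hρ x
    | succ t ih =>
      intro x
      rw [(hstep t).2]
      by_cases hx : x = (F t).1
      · subst hx; rw [Function.update_self]
        exact (hτ _).1.mapsTo (ih _)
      · rw [Function.update_of_ne hx]; exact ih x
  -- rotor at x unchanged while the walk is away from x
  have hconst : ∀ s x, (F s).1 ≠ x → (F (s+1)).2 x = (F s).2 x := by
    intro s x hne
    rw [(hstep s).2, Function.update_of_ne (Ne.symm hne)]
  have hconstN : ∀ x s n, (∀ u, s ≤ u → u < s + n → (F u).1 ≠ x) →
      (F (s+n)).2 x = (F s).2 x := by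
    intro x s n
    induction n with
    | zero => intro _; rfl
    | succ n ih =>
      intro hne
      have h1 : (F (s+n+1)).2 x = (F (s+n)).2 x :=
        hconst (s+n) x (hne (s+n) (Nat.le_add_right _ _) (by omega))
      rw [show s + (n+1) = s + n + 1 from rfl, h1]
      exact ih (fun u hu1 hu2 => hne u hu1 (by omega))
  -- from a visit of x, there is a later visit where the rotor has advanced once
  have hnext : ∀ x, {t | (F t).1 = x}.Infinite → ∀ s, (F s).1 = x →
      ∃ s', s < s' ∧ (F s').1 = x ∧ (F s').2 x = τ x ((F s).2 x) := by
    intro x hinf s hs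
    obtain ⟨u, hu, hsu⟩ := hinf.exists_gt s
    have hex : ∃ u, s < u ∧ (F u).1 = x := ⟨u, hsu, hu⟩
    obtain ⟨hlt, hXs'⟩ := Nat.find_spec hex
    refine ⟨Nat.find hex, hlt, hXs', ?_⟩
    have hmid : ∀ v, s + 1 ≤ v → v < s + 1 + (Nat.find hex - (s+1)) → (F v).1 ≠ x := by
      intro v hv1 hv2 hvx
      exact absurd ⟨by omega, hvx⟩ (Nat.find_min hex (by omega))
    have hc := hconstN x (s+1) (Nat.find hex - (s+1)) hmid
    have hs'eq : s + 1 + (Nat.find hex - (s+1)) = Nat.find hex := by omega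
    rw [hs'eq] at hc
    rw [hc, (hstep s).2, hs, Function.update_self]
  -- iterated version
  have hiter : ∀ x, {t | (F t).1 = x}.Infinite → ∀ s, (F s).1 = x → ∀ j,
      ∃ s', s ≤ s' ∧ (F s').1 = x ∧ (F s').2 x = (τ x)^[j] ((F s).2 x) := by
    intro x hinf s hs j
    induction j with
    | zero => exact ⟨s, le_refl s, hs, rfl⟩
    | succ j ih =>
      obtain ⟨s', hss', hXs', hRs'⟩ := ih
      obtain ⟨s'', hlt, hX'', hR''⟩ := hnext x hinf s' hXs'
      exact ⟨s'', by omega, hX'', by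
        rw [hR'', hRs', ← Function.iterate_succ_apply' (τ x)]⟩
  -- infinitely visited vertices have infinitely visited neighbors
  have hclose : ∀ x, {t | (F t).1 = x}.Infinite → ∀ y, G.Adj x y →
      {t | (F t).1 = y}.Infinite := by
    intro x hinf y hxy
    apply Set.infinite_of_not_bddAbove
    rintro ⟨T, hT⟩
    obtain ⟨s, hXs, hTs⟩ := hinf.exists_gt T
    have hv : (F s).2 x ∈ G.neighborSet x := hadj s x
    have hv' : τ x ((F s).2 x) ∈ G.neighborSet x := (hτ x).1.mapsTo hv
    obtain ⟨i, hi⟩ := (hτ x).2 _ hv' y hxy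
    obtain ⟨s', hss', hXs', hRs'⟩ := hiter x hinf s hXs i
    have hy : (F (s'+1)).1 = y := by
      rw [(hstep s').1, hXs', hRs', ← Function.iterate_succ_apply' (τ x),
        Function.iterate_succ_apply (τ x)]
      exact hi
    have := hT hy
    omega
  -- pigeonhole: some vertex is visited infinitely often
  have hexist : ∃ x, {t | (F t).1 = x}.Infinite := by
    haveI : Finite ↥(Zᶜ : Set V) := hfin.to_subtype
    obtain ⟨y, hy⟩ := Finite.exists_infinite_fiber
      (fun t : ℕ => (⟨(F t).1, hcon t⟩ : ↥(Zᶜ : Set V)))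
    refine ⟨y.1, Set.Infinite.mono ?_ (Set.infinite_coe_iff.mp hy)⟩
    intro t ht
    exact congrArg Subtype.val (Set.mem_singleton_iff.mp ht)
  obtain ⟨x₀, hx₀⟩ := hexist
  obtain ⟨z, hz⟩ := hZ
  -- propagate along a walk to z
  have hreach : ∀ {u v : V}, G.Walk u v → {t | (F t).1 = u}.Infinite →
      {t | (F t).1 = v}.Infinite := by
    intro u v p
    induction p with
    | nil => exact id
    | cons hadj' p ih => exact fun hu => ih (hclose _ hu _ hadj')
  have hzinf := hreach ((hconn.preconnected x₀ z).some) hx₀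
  obtain ⟨t, ht⟩ := hzinf.nonempty
  exact hcon t (ht ▸ hz)
end

section
/- Suppose the sink Z is nonempty and V∖Z is finite. Then for every a ∈ V and every ρ ∈ SF(Z), the rotor walk with initial location a, sink Z, and initial rotor configuration ρ terminates in finite time, and its final rotor configuration σ(a,Z;ρ) is again a Z-oriented spanning forest of G. -/
open Classical

universe u

variable {V : Type u}

section RotorAux

variable {V : Type u} [DecidableEq V]

lemma rotorStep_fixed (τ : V → V → V) (Z : Set V) (p : V × (V → V)) (h : p.1 ∈ Z) :
    rotorStep τ Z p = p := if_pos h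

lemma rotorWalk_succ' (τ : V → V → V) (Z : Set V) (a : V) (ρ : V → V) (t : ℕ) :
    rotorWalk τ Z a ρ (t + 1) = rotorStep τ Z (rotorWalk τ Z a ρ t) :=
  Function.iterate_succ_apply' _ _ _

lemma rotorWalk_frozen (τ : V → V → V) (Z : Set V) (a : V) (ρ : V → V) (T : ℕ)
    (h : (rotorWalk τ Z a ρ T).1 ∈ Z) :
    ∀ s, T ≤ s → rotorWalk τ Z a ρ s = rotorWalk τ Z a ρ T := by
  intro s hs
  obtain ⟨k, rfl⟩ := Nat.exists_eq_add_of_le hs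
  induction k with
  | zero => rfl
  | succ k ih =>
      show rotorWalk τ Z a ρ ((T + k) + 1) = _
      rw [rotorWalk_succ', ih (Nat.le_add_right T k), rotorStep_fixed _ _ _ h]

lemma rotorWalk_step (τ : V → V → V) (Z : Set V) (a : V) (ρ : V → V) (t : ℕ)
    (h : (rotorWalk τ Z a ρ t).1 ∉ Z) :
    (rotorWalk τ Z a ρ (t+1)).1
      = τ (rotorWalk τ Z a ρ t).1 ((rotorWalk τ Z a ρ t).2 (rotorWalk τ Z a ρ t).1) ∧
    (rotorWalk τ Z a ρ (t+1)).2
      = Function.update (rotorWalk τ Z a ρ t).2 (rotorWalk τ Z a ρ t).1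
          (τ (rotorWalk τ Z a ρ t).1 ((rotorWalk τ Z a ρ t).2 (rotorWalk τ Z a ρ t).1)) := by
  rw [rotorWalk_succ']
  unfold rotorStep
  rw [if_neg h]
  exact ⟨rfl, rfl⟩

lemma rotorWalk_zmem (τ : V → V → V) (Z : Set V) (a : V) (ρ : V → V) :
    ∀ t, ∀ x ∈ Z, (rotorWalk τ Z a ρ t).2 x = ρ x := by
  intro t
  induction t with
  | zero => intro x _; rfl
  | succ t ih =>
      intro x hx
      by_cases h : (rotorWalk τ Z a ρ t).1 ∈ Z
      · rw [rotorWalk_succ', rotorStep_fixed _ _ _ h]; exact ih x hx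
      · rw [(rotorWalk_step τ Z a ρ t h).2,
          Function.update_of_ne (by intro he; subst he; exact h hx) _ _]
        exact ih x hx

lemma rotorWalk_adj (G : SimpleGraph V) (τ : V → V → V) (hτ : IsMechanism G τ)
    (Z : Set V) (a : V) (ρ : V → V) (hρadj : ∀ x ∉ Z, G.Adj x (ρ x)) :
    ∀ t, ∀ x ∉ Z, G.Adj x ((rotorWalk τ Z a ρ t).2 x) := by
  intro t
  induction t with
  | zero => exact hρadj
  | succ t ih =>
      intro x hx
      by_cases h : (rotorWalk τ Z a ρ t).1 ∈ Z
      · rw [rotorWalk_succ', rotorStep_fixed _ _ _ h]; exact ih x hx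
      · rw [(rotorWalk_step τ Z a ρ t h).2]
        by_cases hxX : x = (rotorWalk τ Z a ρ t).1
        · rw [hxX] at hx ⊢
          rw [Function.update_self]
          exact (hτ _).1.mapsTo (ih _ hx)
        · rw [Function.update_of_ne hxX _ _]
          exact ih x hx

lemma rotorWalk_forest (τ : V → V → V) (Z : Set V) (a : V) (ρ : V → V)
    (hρf : ∀ x, ∃ ℓ : ℕ, ρ^[ℓ] x ∈ Z) :
    ∀ t x, ∃ ℓ : ℕ, ((rotorWalk τ Z a ρ t).2)^[ℓ] x ∈ Z ∨
      ((rotorWalk τ Z a ρ t).2)^[ℓ] x = (rotorWalk τ Z a ρ t).1 := by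
  intro t
  induction t with
  | zero =>
      intro x
      obtain ⟨ℓ, hℓ⟩ := hρf x
      exact ⟨ℓ, Or.inl hℓ⟩
  | succ t ih =>
      by_cases h : (rotorWalk τ Z a ρ t).1 ∈ Z
      · intro x; rw [rotorWalk_succ', rotorStep_fixed _ _ _ h]; exact ih x
      · obtain ⟨h1, h2⟩ := rotorWalk_step τ Z a ρ t h
        have hupd : ∀ x, x ≠ (rotorWalk τ Z a ρ t).1 →
            (rotorWalk τ Z a ρ (t+1)).2 x = (rotorWalk τ Z a ρ t).2 x := by
          intro x hx; rw [h2, Function.update_of_ne hx _ _]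
        have hX : (rotorWalk τ Z a ρ (t+1)).2 (rotorWalk τ Z a ρ t).1
            = (rotorWalk τ Z a ρ (t+1)).1 := by
          rw [h2, Function.update_self, h1]
        have key : ∀ (ℓ : ℕ) (x : V),
            (((rotorWalk τ Z a ρ t).2)^[ℓ] x ∈ Z ∨
              ((rotorWalk τ Z a ρ t).2)^[ℓ] x = (rotorWalk τ Z a ρ t).1) →
            ∃ m : ℕ, ((rotorWalk τ Z a ρ (t+1)).2)^[m] x ∈ Z ∨
              ((rotorWalk τ Z a ρ (t+1)).2)^[m] x = (rotorWalk τ Z a ρ (t+1)).1 := by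
          intro ℓ
          induction ℓ with
          | zero =>
              intro x hx
              simp only [Function.iterate_zero_apply] at hx
              rcases hx with hx | hx
              · exact ⟨0, Or.inl hx⟩
              · refine ⟨1, Or.inr ?_⟩
                rw [Function.iterate_one, hx, hX]
          | succ ℓ ihℓ =>
              intro x hx
              by_cases hxX : x = (rotorWalk τ Z a ρ t).1
              · refine ⟨1, Or.inr ?_⟩
                rw [Function.iterate_one, hxX, hX]
              · obtain ⟨m, hm⟩ := ihℓ ((rotorWalk τ Z a ρ t).2 x)
                  (by rw [← Function.iterate_succ_apply]; exact hx)
                refine ⟨m + 1, ?_⟩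
                rw [Function.iterate_succ_apply, hupd x hxX]
                exact hm
        intro x
        obtain ⟨ℓ, hℓ⟩ := ih x
        exact key ℓ x hℓ

lemma finalConfig_eq (τ : V → V → V) (Z : Set V) (a : V) (ρ : V → V) (T : ℕ)
    (h : (rotorWalk τ Z a ρ T).1 ∈ Z) :
    finalConfig τ Z a ρ = (rotorWalk τ Z a ρ T).2 := by
  funext x
  have hc : ∀ s, T ≤ s → (rotorWalk τ Z a ρ s).2 x = (rotorWalk τ Z a ρ T).2 x :=
    fun s hs => by rw [rotorWalk_frozen τ Z a ρ T h s hs]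
  show eventualVal (fun t => (rotorWalk τ Z a ρ t).2 x) = _
  have hex : ∃ t : ℕ, ∀ s : ℕ, t ≤ s →
      (fun t => (rotorWalk τ Z a ρ t).2 x) s = (fun t => (rotorWalk τ Z a ρ t).2 x) t := ⟨T, hc⟩
  rw [eventualVal, dif_pos hex]
  have h1 := hex.choose_spec (max hex.choose T) (le_max_left _ _)
  have h2 := hc (max hex.choose T) (le_max_right _ _)
  simp only at h1 h2
  rw [← h1, h2]

/-- Number of visits to `x` strictly before time `t`. -/
noncomputable def visitCount (τ : V → V → V) (Z : Set V) (a : V) (ρ : V → V)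
    (x : V) (t : ℕ) : ℕ :=
  ((Finset.range t).filter (fun s => (rotorWalk τ Z a ρ s).1 = x)).card

lemma visitCount_zero (τ : V → V → V) (Z : Set V) (a : V) (ρ : V → V) (x : V) :
    visitCount τ Z a ρ x 0 = 0 := by simp [visitCount]

lemma visitCount_succ (τ : V → V → V) (Z : Set V) (a : V) (ρ : V → V) (x : V) (t : ℕ) :
    visitCount τ Z a ρ x (t + 1) =
      visitCount τ Z a ρ x t + (if (rotorWalk τ Z a ρ t).1 = x then 1 else 0) := by
  unfold visitCount
  rw [Finset.range_add_one, Finset.filter_insert]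
  by_cases h : (rotorWalk τ Z a ρ t).1 = x
  · rw [if_pos h, if_pos h, Finset.card_insert_of_notMem (by simp)]
  · rw [if_neg h, if_neg h, Nat.add_zero]

lemma visitCount_mono (τ : V → V → V) (Z : Set V) (a : V) (ρ : V → V) (x : V)
    {s t : ℕ} (h : s ≤ t) : visitCount τ Z a ρ x s ≤ visitCount τ Z a ρ x t := by
  apply Finset.card_le_card
  intro u hu
  simp only [Finset.mem_filter, Finset.mem_range] at hu ⊢
  exact ⟨lt_of_lt_of_le hu.1 h, hu.2⟩

lemma visitCount_le (τ : V → V → V) (Z : Set V) (a : V) (ρ : V → V) (x : V) (t : ℕ) :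
    visitCount τ Z a ρ x t ≤ t := by
  calc visitCount τ Z a ρ x t ≤ (Finset.range t).card := Finset.card_filter_le _ _
  _ = t := Finset.card_range t

lemma rotorWalk_rotor_eq (τ : V → V → V) (Z : Set V) (a : V) (ρ : V → V)
    (hno : ∀ t : ℕ, (rotorWalk τ Z a ρ t).1 ∉ Z) :
    ∀ t x, (rotorWalk τ Z a ρ t).2 x = (τ x)^[visitCount τ Z a ρ x t] (ρ x) := by
  intro t
  induction t with
  | zero => intro x; rw [visitCount_zero]; rfl
  | succ t ih =>
      intro x
      rw [(rotorWalk_step τ Z a ρ t (hno t)).2, visitCount_succ]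
      by_cases h : (rotorWalk τ Z a ρ t).1 = x
      · rw [if_pos h, h, Function.update_self, ih x,
          ← Function.iterate_succ_apply' (τ x) (visitCount τ Z a ρ x t) (ρ x)]
      · rw [if_neg h, Function.update_of_ne (fun he => h he.symm) _ _, ih x, Nat.add_zero]

lemma rotorWalk_terminates (G : SimpleGraph V) (hconn : G.Connected)
    (τ : V → V → V) (hτ : IsMechanism G τ) (Z : Set V) (hZ : Z.Nonempty)
    (hfin : (Zᶜ : Set V).Finite) (a : V) (ρ : V → V)
    (hρadj : ∀ x ∉ Z, G.Adj x (ρ x)) :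
    ∃ t : ℕ, (rotorWalk τ Z a ρ t).1 ∈ Z := by
  by_contra hcon
  push_neg at hcon
  have hno : ∀ t : ℕ, (rotorWalk τ Z a ρ t).1 ∉ Z := hcon
  have hrotor := rotorWalk_rotor_eq τ Z a ρ hno
  set S : Set V := {x | ∀ N : ℕ, ∃ t, N ≤ t ∧ (rotorWalk τ Z a ρ t).1 = x} with hSdef
  -- S is nonempty by pigeonhole
  have hSne : S.Nonempty := by
    haveI := hfin.to_subtype
    obtain ⟨y, hy⟩ := Finite.exists_infinite_fiber
      (fun t : ℕ => (⟨(rotorWalk τ Z a ρ t).1, hno t⟩ : (Zᶜ : Set V)))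
    have hy' : {t : ℕ | (rotorWalk τ Z a ρ t).1 = y.1}.Infinite := by
      refine (Set.infinite_coe_iff.mp hy).mono ?_
      intro t ht
      exact congrArg Subtype.val ht
    refine ⟨y.1, fun N => ?_⟩
    obtain ⟨t, ht, hNt⟩ := hy'.exists_gt N
    exact ⟨t, le_of_lt hNt, ht⟩
  -- S is closed under adjacency
  have hclos : ∀ x ∈ S, ∀ y, G.Adj x y → y ∈ S := by
    intro x hx y hadj
    have hxZ : x ∉ Z := by
      obtain ⟨t, -, ht⟩ := hx 0
      rw [← ht]; exact hno t
    -- every natural number is attained as a visit count at a visit time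
    have hub : ∀ m : ℕ, ∃ t, m ≤ visitCount τ Z a ρ x t := by
      intro m
      induction m with
      | zero => exact ⟨0, Nat.zero_le _⟩
      | succ m ihm =>
          obtain ⟨t, ht⟩ := ihm
          obtain ⟨t', ht', hXt'⟩ := hx t
          refine ⟨t' + 1, ?_⟩
          rw [visitCount_succ, if_pos hXt']
          have := visitCount_mono τ Z a ρ x ht'
          omega
    have hvisit : ∀ m : ℕ, ∃ t, (rotorWalk τ Z a ρ t).1 = x ∧ visitCount τ Z a ρ x t = m := by
      intro m
      have hex := hub (m + 1)
      set t' := Nat.find hex with ht'def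
      have hfind : m + 1 ≤ visitCount τ Z a ρ x t' := Nat.find_spec hex
      have ht'pos : t' ≠ 0 := by
        intro h0
        rw [h0, visitCount_zero] at hfind; omega
      obtain ⟨u, hu⟩ : ∃ u, t' = u + 1 := ⟨t' - 1, by omega⟩
      have hmin : ¬ (m + 1 ≤ visitCount τ Z a ρ x u) := Nat.find_min hex (by omega)
      rw [hu, visitCount_succ] at hfind
      by_cases hXu : (rotorWalk τ Z a ρ u).1 = x
      · rw [if_pos hXu] at hfind
        exact ⟨u, hXu, by omega⟩
      · rw [if_neg hXu] at hfind; omega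
    -- orbit facts
    have hρx : ρ x ∈ G.neighborSet x := hρadj x hxZ
    have hyN : y ∈ G.neighborSet x := hadj
    obtain ⟨i, hi⟩ := (hτ x).2 (ρ x) hρx y hyN
    obtain ⟨j', hj'⟩ := (hτ x).2 (τ x y) ((hτ x).1.mapsTo hyN) y hyN
    have hper : (τ x)^[j' + 1] y = y := by
      rw [Function.iterate_succ_apply]; exact hj'
    have horb : ∀ k : ℕ, (τ x)^[i + (j' + 1) * k] (ρ x) = y := by
      intro k
      induction k with
      | zero => simpa using hi
      | succ k ihk =>
          have he : i + (j' + 1) * (k + 1) = (j' + 1) + (i + (j' + 1) * k) := by ring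
          rw [he, Function.iterate_add_apply, ihk]
          exact hper
    intro N
    have hmex : ∃ m, N ≤ m ∧ (τ x)^[m + 1] (ρ x) = y := by
      have hle : N + 1 ≤ (j' + 1) * (N + 1) := Nat.le_mul_of_pos_left (N + 1) (Nat.succ_pos j')
      refine ⟨i + (j' + 1) * (N + 1) - 1, by omega, ?_⟩
      have h1 : i + (j' + 1) * (N + 1) - 1 + 1 = i + (j' + 1) * (N + 1) := by omega
      rw [h1]
      exact horb (N + 1)
    obtain ⟨m, hmN, hm⟩ := hmex
    obtain ⟨t, hXt, hct⟩ := hvisit m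
    refine ⟨t + 1, ?_, ?_⟩
    · have := visitCount_le τ Z a ρ x t
      omega
    · rw [(rotorWalk_step τ Z a ρ t (hno t)).1, hXt, hrotor t x, hct,
        ← Function.iterate_succ_apply' (τ x) m (ρ x)]
      exact hm
  -- propagate along a walk to reach Z, contradiction
  have hwalk : ∀ {u v : V}, G.Walk u v → u ∈ S → v ∈ S := by
    intro u v w
    induction w with
    | nil => exact id
    | cons hadj p ih => exact fun hu => ih (hclos _ hu _ hadj)
  obtain ⟨x₀, hx₀⟩ := hSne
  obtain ⟨z, hz⟩ := hZ
  obtain ⟨w⟩ := hconn x₀ z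
  obtain ⟨t, -, ht⟩ := hwalk w hx₀ 0
  exact hno t (ht.symm ▸ hz)

end RotorAux

/-- If `Z` is nonempty with `V ∖ Z` finite, then for every `a` and
every `ρ ∈ SF(Z)` the rotor walk terminates in finite time and the final rotor
configuration `σ(a,Z;ρ)` is again a `Z`-oriented spanning forest. -/
theorem stmt3 {V : Type u} [DecidableEq V] (G : SimpleGraph V) (hconn : G.Connected)
    [∀ v : V, Fintype (G.neighborSet v)] (τ : V → V → V) (hτ : IsMechanism G τ)
    (Z : Set V) (hZ : Z.Nonempty) (hfin : (Zᶜ : Set V).Finite)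
    (a : V) (ρ : V → V) (hρ : ρ ∈ SFset G Z) :
    (∃ t : ℕ, (rotorWalk τ Z a ρ t).1 ∈ Z) ∧ finalConfig τ Z a ρ ∈ SFset G Z := by
  obtain ⟨hadjρ, hforestρ, hidρ⟩ := hρ
  obtain ⟨T, hT⟩ := rotorWalk_terminates G hconn τ hτ Z hZ hfin a ρ hadjρ
  refine ⟨⟨T, hT⟩, ?_⟩
  rw [finalConfig_eq τ Z a ρ T hT]
  refine ⟨?_, ?_, ?_⟩
  · intro x hx
    exact rotorWalk_adj G τ hτ Z a ρ hadjρ T x hx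
  · intro x
    obtain ⟨ℓ, hℓ⟩ := rotorWalk_forest τ Z a ρ hforestρ T x
    rcases hℓ with h | h
    · exact ⟨ℓ, h⟩
    · exact ⟨ℓ, by rw [h]; exact hT⟩
  · intro x hx
    rw [rotorWalk_zmem τ Z a ρ T x hx]
    exact hidρ x hx
end
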